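/- Let n ∈ ℕ and z ∈ ℂ. Then lim_{ω→+∞} S_n^ω(z) = (1+z)^n, where the limit is taken over real ω tending to +∞. -/

import Mathlib

open Finset Polynomial

lemma ascPochhammer_eval_prod (ℓ : ℕ) (x : ℂ) :
    (ascPochhammer ℂ ℓ).eval x = ∏ i ∈ Finset.range ℓ, (x + i) := by
  induction ℓ with
  | zero => simp
  | succ k ih => rw [ascPochhammer_succ_eval, ih, Finset.prod_range_succ]

lemma aux_real (a b : ℝ) :
    Filter.Tendsto (fun ω : ℝ => (ω + a) / (ω + b)) Filter.atTop (nhds 1) := by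
  have h1 : Filter.Tendsto (fun ω : ℝ => ω + b) Filter.atTop Filter.atTop :=
    Filter.tendsto_atTop_add_const_right _ b Filter.tendsto_id
  have h2 : Filter.Tendsto (fun ω : ℝ => (a - b) / (ω + b)) Filter.atTop (nhds 0) :=
    Filter.Tendsto.div_atTop tendsto_const_nhds h1
  have h3 : Filter.Tendsto (fun ω : ℝ => 1 + (a - b) / (ω + b)) Filter.atTop (nhds 1) := by
    simpa using tendsto_const_nhds.add h2
  refine h3.congr' ?_
  filter_upwards [h1.eventually_gt_atTop 0] with ω hω
  field_simp
  ring

/-- The monic skyburst polynomial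
`S_n^ω(z) = Σ_{ℓ=0}^n binom(n,ℓ) · (−ω)_ℓ/(−n−ω)_ℓ · z^{n−ℓ}`,
where `(a)_ℓ` is the Pochhammer (rising factorial) symbol. -/
noncomputable def skyburst (n : ℕ) (ω : ℝ) (z : ℂ) : ℂ :=
  ∑ ℓ ∈ Finset.range (n + 1),
    (n.choose ℓ : ℂ) *
      ((ascPochhammer ℂ ℓ).eval (-(ω : ℂ)) / (ascPochhammer ℂ ℓ).eval (-(n : ℂ) - (ω : ℂ))) *
      z ^ (n - ℓ)

theorem skyburst_limit_large_omega (n : ℕ) (z : ℂ) :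
    Filter.Tendsto (fun ω : ℝ => skyburst n ω z) Filter.atTop (nhds ((1 + z) ^ n)) := by
  have key : ∀ ℓ ∈ Finset.range (n + 1),
      Filter.Tendsto (fun ω : ℝ =>
        (n.choose ℓ : ℂ) *
          ((ascPochhammer ℂ ℓ).eval (-(ω : ℂ)) / (ascPochhammer ℂ ℓ).eval (-(n : ℂ) - (ω : ℂ))) *
          z ^ (n - ℓ)) Filter.atTop (nhds ((n.choose ℓ : ℂ) * z ^ (n - ℓ))) := by
    intro ℓ _
    have hr : Filter.Tendsto (fun ω : ℝ =>
        (ascPochhammer ℂ ℓ).eval (-(ω : ℂ)) / (ascPochhammer ℂ ℓ).eval (-(n : ℂ) - (ω : ℂ)))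
        Filter.atTop (nhds 1) := by
      have heq : ∀ ω : ℝ,
          (ascPochhammer ℂ ℓ).eval (-(ω : ℂ)) / (ascPochhammer ℂ ℓ).eval (-(n : ℂ) - (ω : ℂ))
          = ∏ i ∈ Finset.range ℓ,
              (((ω + (-(i : ℝ))) / (ω + ((n : ℝ) - i)) : ℝ) : ℂ) := by
        intro ω
        rw [ascPochhammer_eval_prod, ascPochhammer_eval_prod, ← Finset.prod_div_distrib]
        refine Finset.prod_congr rfl fun i _ => ?_
        rw [show (-(ω:ℂ) + i) = -((ω:ℂ) + (-(i:ℝ))) by push_cast; ring,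
          show (-(n:ℂ) - ω + i) = -((ω:ℂ) + ((n:ℝ) - i)) by push_cast; ring,
          neg_div_neg_eq]
        push_cast
        ring_nf
      simp only [heq]
      have : Filter.Tendsto (fun ω : ℝ => ∏ i ∈ Finset.range ℓ,
          (((ω + (-(i : ℝ))) / (ω + ((n : ℝ) - i)) : ℝ) : ℂ)) Filter.atTop
          (nhds (∏ _i ∈ Finset.range ℓ, (1:ℂ))) := by
        refine tendsto_finset_prod _ fun i _ => ?_
        have := (Complex.continuous_ofReal.tendsto 1).comp (aux_real (-(i:ℝ)) ((n:ℝ) - i))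
        simpa [Function.comp_def] using this
      simpa using this
    have h := ((tendsto_const_nhds (x := (n.choose ℓ : ℂ))).mul hr).mul
      (tendsto_const_nhds (x := z ^ (n - ℓ)))
    simpa using h
  have hsum := Filter.Tendsto.congr (fun ω => rfl)
    (tendsto_finset_sum (Finset.range (n + 1)) key)
  have : ((1 + z) ^ n) = ∑ ℓ ∈ Finset.range (n + 1), (n.choose ℓ : ℂ) * z ^ (n - ℓ) := by
    rw [add_pow]
    exact Finset.sum_congr rfl fun k _ => by ring
  rw [this]
  exact hsum
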